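/- Let R(x) = Q(Q⁻¹(x/2) − μ) + Q(Q⁻¹(x/2) + μ) for μ > 0 and x ∈ (0,1) (the ROC curve of the GLRT adversary in dimension 1), and let R_N(x) = Q(Q⁻¹(x) − μ) (the ROC curve of the Neyman–Pearson optimal adversary). Then R(x) ≤ R_N(x) for all x ∈ (0,1). -/

import Mathlib

open MeasureTheory ProbabilityTheory Filter Set Asymptotics
open Topology

/-- Survival function of the standard normal distribution. -/
noncomputable def Q (k : ℝ) : ℝ :=
  (1 / Real.sqrt (2 * Real.pi)) * ∫ t in Set.Ioi k, Real.exp (-t ^ 2 / 2)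

/-- Inverse of the standard normal survival function. -/
noncomputable def Qinv : ℝ → ℝ := Function.invFun Q

noncomputable def phi (t : ℝ) : ℝ :=
  (1 / Real.sqrt (2 * Real.pi)) * Real.exp (-t ^ 2 / 2)

lemma phi_pos (t : ℝ) : 0 < phi t := by
  have h : 0 < Real.sqrt (2 * Real.pi) := Real.sqrt_pos.2 (by positivity)
  exact mul_pos (by positivity) (Real.exp_pos _)

lemma phi_nonneg (t : ℝ) : 0 ≤ phi t := (phi_pos t).le

lemma phi_even (t : ℝ) : phi (-t) = phi t := by
  simp only [phi]
  congr 2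
  ring

lemma integrable_phi : Integrable phi := by
  have h : Integrable (fun t : ℝ => Real.exp (-(1/2 : ℝ) * t ^ 2)) :=
    integrable_exp_neg_mul_sq (by norm_num)
  have h2 := h.const_mul (1 / Real.sqrt (2 * Real.pi))
  have heq : (fun t : ℝ => (1 / Real.sqrt (2 * Real.pi)) * Real.exp (-(1/2 : ℝ) * t ^ 2)) = phi := by
    funext t
    simp only [phi]
    congr 2
    ring
  rwa [heq] at h2

lemma integral_phi : ∫ t, phi t = 1 := by
  have h : ∫ t : ℝ, Real.exp (-(1/2 : ℝ) * t ^ 2) = Real.sqrt (Real.pi / (1/2)) :=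
    integral_gaussian (1/2 : ℝ)
  have heq : (fun t : ℝ => phi t) = fun t : ℝ =>
      (1 / Real.sqrt (2 * Real.pi)) * Real.exp (-(1/2 : ℝ) * t ^ 2) := by
    funext t
    simp only [phi]
    congr 2
    ring
  rw [heq, MeasureTheory.integral_const_mul, h]
  have : Real.pi / (1/2) = 2 * Real.pi := by ring
  rw [this]
  have hpos : 0 < Real.sqrt (2 * Real.pi) := Real.sqrt_pos.2 (by positivity)
  field_simp

lemma Q_eq (k : ℝ) : Q k = ∫ t in Set.Ioi k, phi t := by
  rw [Q, ← MeasureTheory.integral_const_mul]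
  rfl

lemma Q_sub (k k' : ℝ) : Q k - Q k' = ∫ t in k..k', phi t := by
  rw [Q_eq, Q_eq]
  have h1 : ∀ c : ℝ, ∫ t in Set.Ioi c, phi t = (∫ t, phi t) - ∫ t in Set.Iic c, phi t := by
    intro c
    have := intervalIntegral.integral_Iic_add_Ioi (b := c) integrable_phi.integrableOn integrable_phi.integrableOn
    linarith
  rw [h1, h1, ← intervalIntegral.integral_Iic_sub_Iic integrable_phi.integrableOn integrable_phi.integrableOn]
  ring

lemma Q_strictAnti : StrictAnti Q := by
  intro k k' h
  have hpos : 0 < ∫ t in k..k', phi t :=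
    intervalIntegral.intervalIntegral_pos_of_pos integrable_phi.intervalIntegrable phi_pos h
  have := Q_sub k k'
  linarith

lemma Q_continuous : Continuous Q := by
  have hQ : Q = fun k => Q 0 - ∫ t in (0:ℝ)..k, phi t := by
    funext k
    have := Q_sub 0 k
    linarith
  rw [hQ]
  exact continuous_const.sub (integrable_phi.continuous_primitive 0)

lemma Q_symm (k : ℝ) : Q k + Q (-k) = 1 := by
  rw [Q_eq, Q_eq]
  have h := integral_comp_neg_Ioi (-k) phi
  have h2 : ∫ x in Set.Ioi (-k), phi x = ∫ x in Set.Iic k, phi x := by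
    rw [← neg_neg k, neg_neg, ← h]
    refine setIntegral_congr_fun measurableSet_Ioi fun x _ => ?_
    rw [phi_even]
  rw [h2, add_comm, intervalIntegral.integral_Iic_add_Ioi integrable_phi.integrableOn integrable_phi.integrableOn,
    integral_phi]

lemma Q_pos (k : ℝ) : 0 < Q k := by
  have h1 : Q (k+1) ≤ Q k := (Q_strictAnti (by linarith : k < k + 1)).le
  have h2 : Q (k+1) < Q k := Q_strictAnti (by linarith)
  have h3 : 0 ≤ Q (k+1) := by
    rw [Q_eq]
    exact setIntegral_nonneg measurableSet_Ioi fun x _ => phi_nonneg x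
  linarith

lemma Q_lt_one (k : ℝ) : Q k < 1 := by
  have := Q_symm k
  have := Q_pos (-k)
  linarith

lemma Q_tendsto_zero : Tendsto (fun n : ℕ => Q n) atTop (𝓝 0) := by
  have hanti : Antitone (fun n : ℕ => Set.Ioi ((n : ℝ))) := by
    intro i j hij
    exact Set.Ioi_subset_Ioi (by exact_mod_cast hij)
  have h := Antitone.tendsto_setIntegral (f := phi) (μ := volume)
    (fun _ => measurableSet_Ioi) hanti integrable_phi.integrableOn
  have hempty : ⋂ n : ℕ, Set.Ioi ((n : ℝ)) = ∅ := by
    ext x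
    simp only [Set.mem_iInter, Set.mem_Ioi, Set.mem_empty_iff_false, iff_false, not_forall, not_lt]
    obtain ⟨n, hn⟩ := exists_nat_ge x
    exact ⟨n, hn⟩
  rw [hempty] at h
  simp only [Measure.restrict_empty, integral_zero_measure] at h
  have heq : (fun n : ℕ => Q n) = fun n : ℕ => ∫ a in Set.Ioi ((n : ℝ)), phi a := by
    funext n
    exact Q_eq n
  rw [heq]
  exact h

lemma Q_tendsto_one : Tendsto (fun n : ℕ => Q (-(n : ℝ))) atTop (𝓝 1) := by
  have h : Tendsto (fun n : ℕ => 1 - Q n) atTop (𝓝 (1 - 0)) :=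
    tendsto_const_nhds.sub Q_tendsto_zero
  simp only [sub_zero] at h
  refine h.congr fun n => ?_
  have := Q_symm (n : ℝ)
  linarith

lemma exists_Q_eq {y : ℝ} (hy : y ∈ Set.Ioo (0:ℝ) 1) : ∃ k, Q k = y := by
  obtain ⟨n₁, hn₁⟩ : ∃ n : ℕ, Q n < y := (Q_tendsto_zero.eventually_lt_const hy.1).exists
  obtain ⟨n₂, hn₂⟩ : ∃ n : ℕ, y < Q (-(n : ℝ)) := (Q_tendsto_one.eventually_const_lt hy.2).exists
  set m := max n₁ n₂ with hm
  have h1 : Q m ≤ Q n₁ := Q_strictAnti.antitone (by exact_mod_cast le_max_left n₁ n₂)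
  have h2 : Q (-(n₂ : ℝ)) ≤ Q (-(m : ℝ)) := by
    apply Q_strictAnti.antitone
    have : (n₂ : ℝ) ≤ m := by exact_mod_cast le_max_right n₁ n₂
    linarith
  have hle : (-(m : ℝ)) ≤ (m : ℝ) := by
    have : (0:ℝ) ≤ m := Nat.cast_nonneg m
    linarith
  have hmem : y ∈ Set.Icc (Q m) (Q (-(m:ℝ))) := ⟨le_of_lt (lt_of_le_of_lt h1 hn₁), le_of_lt (lt_of_lt_of_le hn₂ h2)⟩
  have := intermediate_value_Icc' hle Q_continuous.continuousOn hmem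
  obtain ⟨k, _, hk⟩ := this
  exact ⟨k, hk⟩

lemma Q_Qinv {y : ℝ} (hy : y ∈ Set.Ioo (0:ℝ) 1) : Q (Qinv y) = y :=
  Function.invFun_eq (exists_Q_eq hy)

lemma phi_shift_eq (μ s : ℝ) : phi (s - μ) = phi s * Real.exp (μ * s - μ ^ 2 / 2) := by
  simp only [phi]
  rw [mul_assoc, ← Real.exp_add]
  congr 2
  ring

lemma integral_Ioi_phi_shift (c d : ℝ) :
    ∫ s in Set.Ioi c, phi (s + d) = ∫ s in Set.Ioi (c + d), phi s := by
  have heq : (fun s => (Set.Ioi c).indicator (fun t => phi (t + d)) s)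
      = fun s => (Set.Ioi (c + d)).indicator phi (s + d) := by
    funext s
    by_cases h : s ∈ Set.Ioi c
    · rw [Set.indicator_of_mem h, Set.indicator_of_mem (by simpa using add_lt_add_right h.out d)]
    · rw [Set.indicator_of_notMem h, Set.indicator_of_notMem (by
        simp only [Set.mem_Ioi] at h ⊢
        intro hc
        exact h (by linarith))]
  rw [← integral_indicator measurableSet_Ioi, heq,
    integral_add_right_eq_self ((Set.Ioi (c + d)).indicator phi) d,
    integral_indicator measurableSet_Ioi]

lemma Q_shift (c μ : ℝ) : Q (c - μ) = ∫ s in Set.Ioi c, phi (s - μ) := by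
  rw [Q_eq]
  have h := integral_Ioi_phi_shift c (-μ)
  simp only [← sub_eq_add_neg] at h
  exact h.symm

lemma mass_Iic (a : ℝ) : ∫ s in Set.Iic (-a), phi s = Q a := by
  rw [Q_eq]
  have h := integral_comp_neg_Ioi a phi
  rw [← h]
  refine (setIntegral_congr_fun measurableSet_Ioi fun x _ => ?_).symm
  rw [phi_even]

lemma Q_add_shift (a μ : ℝ) : Q (a + μ) = ∫ s in Set.Iic (-a), phi (s - μ) := by
  have h := integral_comp_neg_Ioi a (fun s => phi (s - μ))
  rw [← h]
  have h2 : ∫ x in Set.Ioi a, phi (-x - μ) = ∫ x in Set.Ioi a, phi (x + μ) := by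
    refine setIntegral_congr_fun measurableSet_Ioi fun x _ => ?_
    rw [show (-x - μ : ℝ) = -(x + μ) by ring, phi_even]
  rw [h2, integral_Ioi_phi_shift a μ, ← Q_eq]

lemma key_lemma (μ : ℝ) (hμ : 0 < μ) (A B : Set ℝ) (hA : MeasurableSet A)
    (hB : MeasurableSet B) (c : ℝ) (hAc : A \ B ⊆ Set.Iic c) (hBc : B \ A ⊆ Set.Ici c)
    (hAB : ∫ s in A, phi s = ∫ s in B, phi s) :
    ∫ s in A, phi (s - μ) ≤ ∫ s in B, phi (s - μ) := by
  have hint : Integrable (fun s => phi (s - μ)) := integrable_phi.comp_sub_right μ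
  have hdA : (∫ s in A ∩ B, phi (s - μ)) + ∫ s in A \ B, phi (s - μ) = ∫ s in A, phi (s - μ) :=
    integral_inter_add_diff hB hint.integrableOn
  have hdB : (∫ s in B ∩ A, phi (s - μ)) + ∫ s in B \ A, phi (s - μ) = ∫ s in B, phi (s - μ) :=
    integral_inter_add_diff hA hint.integrableOn
  rw [Set.inter_comm] at hdB
  have hmA : (∫ s in A ∩ B, phi s) + ∫ s in A \ B, phi s = ∫ s in A, phi s :=
    integral_inter_add_diff hB integrable_phi.integrableOn
  have hmB : (∫ s in B ∩ A, phi s) + ∫ s in B \ A, phi s = ∫ s in B, phi s :=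
    integral_inter_add_diff hA integrable_phi.integrableOn
  rw [Set.inter_comm] at hmB
  have hm : ∫ s in A \ B, phi s = ∫ s in B \ A, phi s := by linarith
  set K := Real.exp (μ * c - μ ^ 2 / 2) with hK
  have step1 : ∫ s in A \ B, phi (s - μ) ≤ K * ∫ s in A \ B, phi s := by
    rw [← MeasureTheory.integral_const_mul]
    refine setIntegral_mono_on hint.integrableOn
      (integrable_phi.integrableOn.const_mul K) (hA.diff hB) fun s hs => ?_
    rw [phi_shift_eq]
    have hsc : s ≤ c := hAc hs
    have hexp : Real.exp (μ * s - μ ^ 2 / 2) ≤ K :=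
      Real.exp_le_exp.2 (by nlinarith)
    calc phi s * Real.exp (μ * s - μ ^ 2 / 2) ≤ phi s * K :=
          mul_le_mul_of_nonneg_left hexp (phi_nonneg s)
      _ = K * phi s := mul_comm _ _
  have step2 : K * ∫ s in B \ A, phi s ≤ ∫ s in B \ A, phi (s - μ) := by
    rw [← MeasureTheory.integral_const_mul]
    refine setIntegral_mono_on (integrable_phi.integrableOn.const_mul K)
      hint.integrableOn (hB.diff hA) fun s hs => ?_
    rw [phi_shift_eq]
    have hsc : c ≤ s := hBc hs
    have hexp : K ≤ Real.exp (μ * s - μ ^ 2 / 2) :=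
      Real.exp_le_exp.2 (by nlinarith)
    calc K * phi s = phi s * K := mul_comm _ _
      _ ≤ phi s * Real.exp (μ * s - μ ^ 2 / 2) :=
          mul_le_mul_of_nonneg_left hexp (phi_nonneg s)
  rw [hm] at step1
  linarith

theorem stmt3 (μ : ℝ) (hμ : 0 < μ) (x : ℝ) (hx : x ∈ Set.Ioo (0 : ℝ) 1) :
    Q (Qinv (x / 2) - μ) + Q (Qinv (x / 2) + μ) ≤ Q (Qinv x - μ) := by
  obtain ⟨hx0, hx1⟩ := hx
  set a := Qinv (x / 2) with hadef
  set b := Qinv x with hbdef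
  have hxh : x / 2 ∈ Set.Ioo (0:ℝ) 1 := ⟨by linarith, by linarith⟩
  have ha : Q a = x / 2 := Q_Qinv hxh
  have hb : Q b = x := Q_Qinv ⟨hx0, hx1⟩
  have hba : b < a := by
    have h : Q a < Q b := by rw [ha, hb]; linarith
    exact Q_strictAnti.lt_iff_gt.1 h
  have ha0 : 0 < a := by
    have h0 : Q 0 = 1 / 2 := by
      have := Q_symm 0
      rw [neg_zero] at this
      linarith
    have h : Q a < Q 0 := by rw [ha, h0]; linarith
    exact Q_strictAnti.lt_iff_gt.1 h
  have hint : Integrable (fun s => phi (s - μ)) := integrable_phi.comp_sub_right μ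
  rw [Q_shift a μ, Q_shift b μ, Q_add_shift a μ]
  have hsplit : ∫ s in Set.Ioi b, phi (s - μ)
      = (∫ s in Set.Ioc b a, phi (s - μ)) + ∫ s in Set.Ioi a, phi (s - μ) := by
    rw [← setIntegral_union (Set.Ioc_disjoint_Ioi le_rfl) measurableSet_Ioi
      hint.integrableOn hint.integrableOn, Set.Ioc_union_Ioi_eq_Ioi hba.le]
  rw [hsplit]
  have hmassA : ∫ s in Set.Iic (-a), phi s = x / 2 := by rw [mass_Iic, ha]
  have hmassB : ∫ s in Set.Ioc b a, phi s = x / 2 := by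
    have h := Q_sub b a
    rw [ha, hb, intervalIntegral.integral_of_le hba.le] at h
    linarith
  have hkey := key_lemma μ hμ (Set.Iic (-a)) (Set.Ioc b a) measurableSet_Iic
    measurableSet_Ioc (max b (-a))
    (fun s hs => le_trans hs.1 (le_max_right b (-a)))
    (fun s hs => max_le hs.1.1.le (not_le.1 hs.2).le)
    (hmassA.trans hmassB.symm)
  linarith
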